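/- Let m ≥ 2 be an integer and let v : ℝ^m ∖ {0} → ℝ^{m³} be the cubic Misawa–Nakauchi map with components v_{ijk}(x) = (1/√((m−1)(m+2)))( δ_{ij} x_k/r + δ_{jk} x_i/r + δ_{ik} x_j/r − (m+2) x_i x_j x_k / r³ ). Then for every x ∈ ℝ^m ∖ {0} and all indices i,j,k, the componentwise Euclidean Laplacian satisfies Δv_{ijk}(x) = −(3(m+1)/r(x)²) v_{ijk}(x). -/

import Mathlib

noncomputable section

open Real MeasureTheory

/-- Partial derivative of `f` in the `a`-th coordinate direction. -/
def pd {m : ℕ} (a : Fin m) (f : EuclideanSpace ℝ (Fin m) → ℝ)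
    (x : EuclideanSpace ℝ (Fin m)) : ℝ :=
  fderiv ℝ f x (EuclideanSpace.single a 1)

/-- Euclidean Laplacian `Δf = Σ_a ∂²f/∂x_a²`. -/
def lap {m : ℕ} (f : EuclideanSpace ℝ (Fin m) → ℝ)
    (x : EuclideanSpace ℝ (Fin m)) : ℝ :=
  ∑ a : Fin m, pd a (pd a f) x

/-- Squared norm of the total derivative: `|∇w|² = Σ_{k,a} (∂_k w_a)²`. -/
def gradSq {m : ℕ} {ι : Type*} [Fintype ι]
    (w : ι → EuclideanSpace ℝ (Fin m) → ℝ) (x : EuclideanSpace ℝ (Fin m)) : ℝ :=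
  ∑ k : Fin m, ∑ a : ι, (pd k (w a) x) ^ 2

/-- The cubic Misawa–Nakauchi map
`v_{ijk}(x) = (1/√((m−1)(m+2)))(δ_{ij}x_k/r + δ_{jk}x_i/r + δ_{ik}x_j/r − (m+2)xᵢxⱼx_k/r³)`. -/
def vMN (m : ℕ) (i j k : Fin m) (x : EuclideanSpace ℝ (Fin m)) : ℝ :=
  (1 / Real.sqrt (((m : ℝ) - 1) * ((m : ℝ) + 2))) *
    ((if i = j then (1 : ℝ) else 0) * x k / ‖x‖
      + (if j = k then (1 : ℝ) else 0) * x i / ‖x‖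
      + (if i = k then (1 : ℝ) else 0) * x j / ‖x‖
      - ((m : ℝ) + 2) * x i * x j * x k / ‖x‖ ^ 3)

section Toolkit
variable {m : ℕ} {x : EuclideanSpace ℝ (Fin m)} {f g : EuclideanSpace ℝ (Fin m) → ℝ} {a : Fin m}

lemma pd_congr (h : f =ᶠ[nhds x] g) : pd a f x = pd a g x := by
  unfold pd; rw [h.fderiv_eq]

lemma pd_add (hf : DifferentiableAt ℝ f x) (hg : DifferentiableAt ℝ g x) :
    pd a (fun y => f y + g y) x = pd a f x + pd a g x := by
  unfold pd; rw [fderiv_fun_add hf hg]; simp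

lemma pd_sub (hf : DifferentiableAt ℝ f x) (hg : DifferentiableAt ℝ g x) :
    pd a (fun y => f y - g y) x = pd a f x - pd a g x := by
  unfold pd; rw [fderiv_fun_sub hf hg]; simp

lemma pd_const_mul (c : ℝ) (hf : DifferentiableAt ℝ f x) :
    pd a (fun y => c * f y) x = c * pd a f x := by
  unfold pd; rw [fderiv_const_mul hf c]; simp

lemma pd_mul (hf : DifferentiableAt ℝ f x) (hg : DifferentiableAt ℝ g x) :
    pd a (fun y => f y * g y) x = pd a f x * g x + f x * pd a g x := by
  unfold pd; rw [fderiv_fun_mul hf hg]; simp; ring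

lemma diff_coord (p : Fin m) : DifferentiableAt ℝ (fun y : EuclideanSpace ℝ (Fin m) => y p) x :=
  (EuclideanSpace.proj (𝕜 := ℝ) p).differentiableAt

lemma pd_coord (p : Fin m) :
    pd a (fun y : EuclideanSpace ℝ (Fin m) => y p) x = if a = p then 1 else 0 := by
  unfold pd
  rw [show (fun y : EuclideanSpace ℝ (Fin m) => y p) = ⇑(EuclideanSpace.proj (𝕜 := ℝ) p) from rfl,
    ContinuousLinearMap.fderiv]
  simp [EuclideanSpace.single_apply, eq_comm]


lemma hasFDerivAt_norm' (hx : x ≠ 0) :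
    HasFDerivAt (fun y : EuclideanSpace ℝ (Fin m) => ‖y‖) (‖x‖⁻¹ • innerSL ℝ x) x := by
  have hr : ‖x‖ ≠ 0 := norm_ne_zero_iff.mpr hx
  have h0 : HasFDerivAt (fun y : EuclideanSpace ℝ (Fin m) => ‖y‖ ^ 2)
      (2 • (innerSL ℝ x)) x := (hasStrictFDerivAt_norm_sq x).hasFDerivAt
  have h2 := h0.sqrt (by positivity)
  have hfun : (fun y : EuclideanSpace ℝ (Fin m) => √(‖y‖ ^ 2))
      = fun y : EuclideanSpace ℝ (Fin m) => ‖y‖ := by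
    funext y; rw [Real.sqrt_sq (norm_nonneg y)]
  rw [hfun] at h2
  refine h2.congr_fderiv ?_
  rw [Real.sqrt_sq (norm_nonneg x)]
  ext y
  simp only [ContinuousLinearMap.smul_apply, smul_eq_mul, ContinuousLinearMap.coe_smul',
    Pi.smul_apply, nsmul_eq_mul]
  field_simp
  ring

lemma hasFDerivAt_rinv (n : ℕ) (hx : x ≠ 0) :
    HasFDerivAt (fun y : EuclideanSpace ℝ (Fin m) => (‖y‖ ^ (n+1))⁻¹)
      ((-((n:ℝ)+1) * ‖x‖ ^ n / (‖x‖ ^ (n+1)) ^ 2) • (‖x‖⁻¹ • innerSL ℝ x)) x := by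
  have hr : ‖x‖ ≠ 0 := norm_ne_zero_iff.mpr hx
  have h := ((hasDerivAt_pow (n+1) ‖x‖).inv (pow_ne_zero _ hr)).comp_hasFDerivAt x
    (hasFDerivAt_norm' hx)
  have h' : HasFDerivAt (fun y : EuclideanSpace ℝ (Fin m) => (‖y‖ ^ (n+1))⁻¹) _ x := h
  refine h'.congr_fderiv ?_
  rw [Nat.add_sub_cancel]
  congr 1
  push_cast
  ring

lemma diff_rinv (n : ℕ) (hx : x ≠ 0) :
    DifferentiableAt ℝ (fun y : EuclideanSpace ℝ (Fin m) => (‖y‖ ^ n)⁻¹) x := by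
  have hr : ‖x‖ ≠ 0 := norm_ne_zero_iff.mpr hx
  exact ((hasFDerivAt_norm' hx).differentiableAt.pow n).inv (pow_ne_zero n hr)

lemma pd_rinv (n : ℕ) (hx : x ≠ 0) :
    pd a (fun y : EuclideanSpace ℝ (Fin m) => (‖y‖ ^ (n+1))⁻¹) x
      = -(((n:ℝ)+1) * x a) / ‖x‖ ^ (n+3) := by
  have hr : ‖x‖ ≠ 0 := norm_ne_zero_iff.mpr hx
  unfold pd
  rw [(hasFDerivAt_rinv n hx).fderiv]
  simp only [ContinuousLinearMap.smul_apply, smul_eq_mul, innerSL_apply_apply,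
    EuclideanSpace.inner_single_right, map_one, one_mul, conj_trivial]
  field_simp
  ring
section Bricks
variable {m : ℕ} {x : EuclideanSpace ℝ (Fin m)} {a : Fin m}

lemma diff_inv1 (hx : x ≠ 0) :
    DifferentiableAt ℝ (fun y : EuclideanSpace ℝ (Fin m) => ‖y‖⁻¹) x :=
  (hasFDerivAt_norm' hx).differentiableAt.inv (norm_ne_zero_iff.mpr hx)

lemma pd_inv1 (hx : x ≠ 0) :
    pd a (fun y : EuclideanSpace ℝ (Fin m) => ‖y‖⁻¹) x = -(x a) / ‖x‖ ^ 3 := by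
  have h := pd_rinv (a := a) (x := x) 0 hx; norm_num at h; exact h

lemma pd_inv3 (hx : x ≠ 0) :
    pd a (fun y : EuclideanSpace ℝ (Fin m) => (‖y‖ ^ 3)⁻¹) x = -(3 * x a) / ‖x‖ ^ 5 := by
  have h := pd_rinv (a := a) (x := x) 2 hx; norm_num at h; exact h

lemma pd_inv5 (hx : x ≠ 0) :
    pd a (fun y : EuclideanSpace ℝ (Fin m) => (‖y‖ ^ 5)⁻¹) x = -(5 * x a) / ‖x‖ ^ 7 := by
  have h := pd_rinv (a := a) (x := x) 4 hx; norm_num at h; exact h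

lemma pd_B1_1 (p : Fin m) (hx : x ≠ 0) :
    pd a (fun y : EuclideanSpace ℝ (Fin m) => y p * ‖y‖⁻¹) x
      = (if a = p then (1:ℝ) else 0) / ‖x‖ - x a * x p / ‖x‖ ^ 3 := by
  rw [pd_mul (diff_coord p) (diff_inv1 hx), pd_coord, pd_inv1 hx]; ring

lemma pd_B1_3 (p : Fin m) (hx : x ≠ 0) :
    pd a (fun y : EuclideanSpace ℝ (Fin m) => y p * (‖y‖ ^ 3)⁻¹) x
      = (if a = p then (1:ℝ) else 0) / ‖x‖ ^ 3 - 3 * x a * x p / ‖x‖ ^ 5 := by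
  rw [pd_mul (diff_coord p) (diff_rinv 3 hx), pd_coord, pd_inv3 hx]; ring

lemma pd_B2_3 (p q : Fin m) (hx : x ≠ 0) :
    pd a (fun y : EuclideanSpace ℝ (Fin m) => y p * (y q * (‖y‖ ^ 3)⁻¹)) x
      = (if a = p then (1:ℝ) else 0) * x q / ‖x‖ ^ 3
        + (if a = q then (1:ℝ) else 0) * x p / ‖x‖ ^ 3
        - 3 * x a * x p * x q / ‖x‖ ^ 5 := by
  rw [pd_mul (diff_coord p) ((diff_coord q).fun_mul (diff_rinv 3 hx)), pd_coord, pd_B1_3 q hx]; ring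

lemma pd_B3_3 (p q s : Fin m) (hx : x ≠ 0) :
    pd a (fun y : EuclideanSpace ℝ (Fin m) => y p * (y q * (y s * (‖y‖ ^ 3)⁻¹))) x
      = (if a = p then (1:ℝ) else 0) * x q * x s / ‖x‖ ^ 3
        + (if a = q then (1:ℝ) else 0) * x p * x s / ‖x‖ ^ 3
        + (if a = s then (1:ℝ) else 0) * x p * x q / ‖x‖ ^ 3
        - 3 * x a * x p * x q * x s / ‖x‖ ^ 5 := by
  rw [pd_mul (diff_coord p) ((diff_coord q).fun_mul ((diff_coord s).fun_mul (diff_rinv 3 hx))),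
    pd_coord, pd_B2_3 q s hx]; ring

lemma pd_B1_5 (p : Fin m) (hx : x ≠ 0) :
    pd a (fun y : EuclideanSpace ℝ (Fin m) => y p * (‖y‖ ^ 5)⁻¹) x
      = (if a = p then (1:ℝ) else 0) / ‖x‖ ^ 5 - 5 * x a * x p / ‖x‖ ^ 7 := by
  rw [pd_mul (diff_coord p) (diff_rinv 5 hx), pd_coord, pd_inv5 hx]; ring

lemma pd_B2_5 (p q : Fin m) (hx : x ≠ 0) :
    pd a (fun y : EuclideanSpace ℝ (Fin m) => y p * (y q * (‖y‖ ^ 5)⁻¹)) x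
      = (if a = p then (1:ℝ) else 0) * x q / ‖x‖ ^ 5
        + (if a = q then (1:ℝ) else 0) * x p / ‖x‖ ^ 5
        - 5 * x a * x p * x q / ‖x‖ ^ 7 := by
  rw [pd_mul (diff_coord p) ((diff_coord q).fun_mul (diff_rinv 5 hx)), pd_coord, pd_B1_5 q hx]; ring

lemma pd_B3_5 (p q s : Fin m) (hx : x ≠ 0) :
    pd a (fun y : EuclideanSpace ℝ (Fin m) => y p * (y q * (y s * (‖y‖ ^ 5)⁻¹))) x
      = (if a = p then (1:ℝ) else 0) * x q * x s / ‖x‖ ^ 5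
        + (if a = q then (1:ℝ) else 0) * x p * x s / ‖x‖ ^ 5
        + (if a = s then (1:ℝ) else 0) * x p * x q / ‖x‖ ^ 5
        - 5 * x a * x p * x q * x s / ‖x‖ ^ 7 := by
  rw [pd_mul (diff_coord p) ((diff_coord q).fun_mul ((diff_coord s).fun_mul (diff_rinv 5 hx))),
    pd_coord, pd_B2_5 q s hx]; ring

lemma pd_B4_5 (p q s t : Fin m) (hx : x ≠ 0) :
    pd a (fun y : EuclideanSpace ℝ (Fin m) => y p * (y q * (y s * (y t * (‖y‖ ^ 5)⁻¹)))) x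
      = (if a = p then (1:ℝ) else 0) * x q * x s * x t / ‖x‖ ^ 5
        + (if a = q then (1:ℝ) else 0) * x p * x s * x t / ‖x‖ ^ 5
        + (if a = s then (1:ℝ) else 0) * x p * x q * x t / ‖x‖ ^ 5
        + (if a = t then (1:ℝ) else 0) * x p * x q * x s / ‖x‖ ^ 5
        - 5 * x a * x p * x q * x s * x t / ‖x‖ ^ 7 := by
  rw [pd_mul (diff_coord p)
    ((diff_coord q).fun_mul ((diff_coord s).fun_mul ((diff_coord t).fun_mul (diff_rinv 5 hx)))),
    pd_coord, pd_B3_5 q s t hx]; ring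

end Bricks
section Main
variable {m : ℕ}

lemma vMN_eq (i j k : Fin m) : vMN m i j k = fun y : EuclideanSpace ℝ (Fin m) =>
    (1 / Real.sqrt (((m : ℝ) - 1) * ((m : ℝ) + 2))) *
      ((if i = j then (1:ℝ) else 0) * (y k * ‖y‖⁻¹)
        + (if j = k then (1:ℝ) else 0) * (y i * ‖y‖⁻¹)
        + (if i = k then (1:ℝ) else 0) * (y j * ‖y‖⁻¹)
        - ((m : ℝ) + 2) * (y i * (y j * (y k * (‖y‖ ^ 3)⁻¹)))) := by
  funext y; simp only [vMN]; ring

lemma pd_vMN (i j k : Fin m) (a : Fin m) (y : EuclideanSpace ℝ (Fin m)) (hy : y ≠ 0) :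
    pd a (vMN m i j k) y =
    (1 / Real.sqrt (((m : ℝ) - 1) * ((m : ℝ) + 2))) *
      (((if i = j then (1:ℝ) else 0) * (if a = k then (1:ℝ) else 0)
          + (if j = k then (1:ℝ) else 0) * (if a = i then (1:ℝ) else 0)
          + (if i = k then (1:ℝ) else 0) * (if a = j then (1:ℝ) else 0)) * ‖y‖⁻¹
        - (if i = j then (1:ℝ) else 0) * (y a * (y k * (‖y‖ ^ 3)⁻¹))
        - (if j = k then (1:ℝ) else 0) * (y a * (y i * (‖y‖ ^ 3)⁻¹))
        - (if i = k then (1:ℝ) else 0) * (y a * (y j * (‖y‖ ^ 3)⁻¹))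
        - ((m : ℝ) + 2) * (if a = i then (1:ℝ) else 0) * (y j * (y k * (‖y‖ ^ 3)⁻¹))
        - ((m : ℝ) + 2) * (if a = j then (1:ℝ) else 0) * (y i * (y k * (‖y‖ ^ 3)⁻¹))
        - ((m : ℝ) + 2) * (if a = k then (1:ℝ) else 0) * (y i * (y j * (‖y‖ ^ 3)⁻¹))
        + 3 * ((m : ℝ) + 2) * (y a * (y i * (y j * (y k * (‖y‖ ^ 5)⁻¹))))) := by
  have d1 : DifferentiableAt ℝ (fun z : EuclideanSpace ℝ (Fin m) => z k * ‖z‖⁻¹) y :=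
    (diff_coord k).mul (diff_inv1 hy)
  have d2 : DifferentiableAt ℝ (fun z : EuclideanSpace ℝ (Fin m) => z i * ‖z‖⁻¹) y :=
    (diff_coord i).mul (diff_inv1 hy)
  have d3 : DifferentiableAt ℝ (fun z : EuclideanSpace ℝ (Fin m) => z j * ‖z‖⁻¹) y :=
    (diff_coord j).mul (diff_inv1 hy)
  have dw : DifferentiableAt ℝ
      (fun z : EuclideanSpace ℝ (Fin m) => z i * (z j * (z k * (‖z‖ ^ 3)⁻¹))) y :=
    (diff_coord i).mul ((diff_coord j).mul ((diff_coord k).mul (diff_rinv 3 hy)))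
  rw [vMN_eq]
  rw [pd_const_mul _ ((((d1.const_mul _).fun_add (d2.const_mul _)).fun_add (d3.const_mul _)).fun_sub
    (dw.const_mul _))]
  rw [pd_sub ((d1.const_mul _).fun_add (d2.const_mul _) |>.fun_add (d3.const_mul _)) (dw.const_mul _)]
  rw [pd_add ((d1.const_mul _).fun_add (d2.const_mul _)) (d3.const_mul _)]
  rw [pd_add (d1.const_mul _) (d2.const_mul _)]
  rw [pd_const_mul _ d1, pd_const_mul _ d2, pd_const_mul _ d3, pd_const_mul _ dw]
  rw [pd_B1_1 k hy, pd_B1_1 i hy, pd_B1_1 j hy, pd_B3_3 i j k hy]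
  ring

end Main

set_option maxHeartbeats 2000000 in
theorem stmt13 (m : ℕ) (hm : 2 ≤ m) (x : EuclideanSpace ℝ (Fin m)) (hx : x ≠ 0)
    (i j k : Fin m) :
    lap (vMN m i j k) x = -(3 * ((m : ℝ) + 1) / ‖x‖ ^ 2) * vMN m i j k x := by
  have hr : ‖x‖ ≠ 0 := norm_ne_zero_iff.mpr hx
  have dB : ∀ p q : Fin m,
      DifferentiableAt ℝ (fun y : EuclideanSpace ℝ (Fin m) => y p * (y q * (‖y‖ ^ 3)⁻¹)) x :=
    fun p q => (diff_coord p).mul ((diff_coord q).mul (diff_rinv 3 hx))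
  have dI1 : DifferentiableAt ℝ (fun y : EuclideanSpace ℝ (Fin m) => ‖y‖⁻¹) x := diff_inv1 hx
  have key : ∀ a : Fin m, pd a (pd a (vMN m i j k)) x =
      (1 / Real.sqrt (((m : ℝ) - 1) * ((m : ℝ) + 2))) *
          (-(((if i = j then (1:ℝ) else 0) * x k + (if j = k then (1:ℝ) else 0) * x i
              + (if i = k then (1:ℝ) else 0) * x j) / ‖x‖ ^ 3)
            + 3 * ((m : ℝ) + 2) * (x i * x j * x k) / ‖x‖ ^ 5)
        + (1 / Real.sqrt (((m : ℝ) - 1) * ((m : ℝ) + 2))) * (-2 * ((m : ℝ) + 2) * x k / ‖x‖ ^ 3)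
            * ((if a = i then (1:ℝ) else 0) * (if a = j then (1:ℝ) else 0))
        + (1 / Real.sqrt (((m : ℝ) - 1) * ((m : ℝ) + 2))) * (-2 * ((m : ℝ) + 2) * x j / ‖x‖ ^ 3)
            * ((if a = i then (1:ℝ) else 0) * (if a = k then (1:ℝ) else 0))
        + (1 / Real.sqrt (((m : ℝ) - 1) * ((m : ℝ) + 2))) * (-2 * ((m : ℝ) + 2) * x i / ‖x‖ ^ 3)
            * ((if a = j then (1:ℝ) else 0) * (if a = k then (1:ℝ) else 0))
        + (1 / Real.sqrt (((m : ℝ) - 1) * ((m : ℝ) + 2))) *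
            (-2 * (if j = k then (1:ℝ) else 0) / ‖x‖ ^ 3
              + 6 * ((m : ℝ) + 2) * (x j * x k) / ‖x‖ ^ 5)
            * ((if a = i then (1:ℝ) else 0) * x a)
        + (1 / Real.sqrt (((m : ℝ) - 1) * ((m : ℝ) + 2))) *
            (-2 * (if i = k then (1:ℝ) else 0) / ‖x‖ ^ 3
              + 6 * ((m : ℝ) + 2) * (x i * x k) / ‖x‖ ^ 5)
            * ((if a = j then (1:ℝ) else 0) * x a)
        + (1 / Real.sqrt (((m : ℝ) - 1) * ((m : ℝ) + 2))) *
            (-2 * (if i = j then (1:ℝ) else 0) / ‖x‖ ^ 3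
              + 6 * ((m : ℝ) + 2) * (x i * x j) / ‖x‖ ^ 5)
            * ((if a = k then (1:ℝ) else 0) * x a)
        + (1 / Real.sqrt (((m : ℝ) - 1) * ((m : ℝ) + 2))) *
            (3 * ((if i = j then (1:ℝ) else 0) * x k + (if j = k then (1:ℝ) else 0) * x i
                + (if i = k then (1:ℝ) else 0) * x j) / ‖x‖ ^ 5
              - 15 * ((m : ℝ) + 2) * (x i * x j * x k) / ‖x‖ ^ 7)
            * (x a) ^ 2 := by
    intro a
    have dB45 : DifferentiableAt ℝ
        (fun y : EuclideanSpace ℝ (Fin m) => y a * (y i * (y j * (y k * (‖y‖ ^ 5)⁻¹)))) x :=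
      (diff_coord a).mul ((diff_coord i).mul ((diff_coord j).mul
        ((diff_coord k).mul (diff_rinv 5 hx))))
    have hev : pd a (vMN m i j k) =ᶠ[nhds x] fun y : EuclideanSpace ℝ (Fin m) =>
        (1 / Real.sqrt (((m : ℝ) - 1) * ((m : ℝ) + 2))) *
          (((if i = j then (1:ℝ) else 0) * (if a = k then (1:ℝ) else 0)
              + (if j = k then (1:ℝ) else 0) * (if a = i then (1:ℝ) else 0)
              + (if i = k then (1:ℝ) else 0) * (if a = j then (1:ℝ) else 0)) * ‖y‖⁻¹
            - (if i = j then (1:ℝ) else 0) * (y a * (y k * (‖y‖ ^ 3)⁻¹))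
            - (if j = k then (1:ℝ) else 0) * (y a * (y i * (‖y‖ ^ 3)⁻¹))
            - (if i = k then (1:ℝ) else 0) * (y a * (y j * (‖y‖ ^ 3)⁻¹))
            - ((m : ℝ) + 2) * (if a = i then (1:ℝ) else 0) * (y j * (y k * (‖y‖ ^ 3)⁻¹))
            - ((m : ℝ) + 2) * (if a = j then (1:ℝ) else 0) * (y i * (y k * (‖y‖ ^ 3)⁻¹))
            - ((m : ℝ) + 2) * (if a = k then (1:ℝ) else 0) * (y i * (y j * (‖y‖ ^ 3)⁻¹))
            + 3 * ((m : ℝ) + 2) * (y a * (y i * (y j * (y k * (‖y‖ ^ 5)⁻¹))))) := by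
      filter_upwards [isOpen_compl_singleton.mem_nhds
        (Set.mem_compl_singleton_iff.mpr hx)] with y hy
      exact pd_vMN i j k a y hy
    rw [pd_congr hev]
    have h1 : DifferentiableAt ℝ (fun y : EuclideanSpace ℝ (Fin m) =>
        ((if i = j then (1:ℝ) else 0) * (if a = k then (1:ℝ) else 0)
          + (if j = k then (1:ℝ) else 0) * (if a = i then (1:ℝ) else 0)
          + (if i = k then (1:ℝ) else 0) * (if a = j then (1:ℝ) else 0)) * ‖y‖⁻¹) x :=
      dI1.const_mul _
    have h12 := h1.fun_sub ((dB a k).const_mul (if i = j then (1:ℝ) else 0))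
    have h13 := h12.fun_sub ((dB a i).const_mul (if j = k then (1:ℝ) else 0))
    have h14 := h13.fun_sub ((dB a j).const_mul (if i = k then (1:ℝ) else 0))
    have h15 := h14.fun_sub ((dB j k).const_mul (((m : ℝ) + 2) * (if a = i then (1:ℝ) else 0)))
    have h16 := h15.fun_sub ((dB i k).const_mul (((m : ℝ) + 2) * (if a = j then (1:ℝ) else 0)))
    have h17 := h16.fun_sub ((dB i j).const_mul (((m : ℝ) + 2) * (if a = k then (1:ℝ) else 0)))
    rw [pd_const_mul _ (h17.fun_add (dB45.const_mul (3 * ((m : ℝ) + 2))))]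
    rw [pd_add h17 (dB45.const_mul (3 * ((m : ℝ) + 2)))]
    rw [pd_sub h16 ((dB i j).const_mul _)]
    rw [pd_sub h15 ((dB i k).const_mul _)]
    rw [pd_sub h14 ((dB j k).const_mul _)]
    rw [pd_sub h13 ((dB a j).const_mul _)]
    rw [pd_sub h12 ((dB a i).const_mul _)]
    rw [pd_sub h1 ((dB a k).const_mul _)]
    rw [pd_const_mul _ dI1, pd_const_mul _ (dB a k), pd_const_mul _ (dB a i),
      pd_const_mul _ (dB a j), pd_const_mul _ (dB j k), pd_const_mul _ (dB i k),
      pd_const_mul _ (dB i j), pd_const_mul _ dB45]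
    rw [pd_inv1 hx, pd_B2_3 a k hx, pd_B2_3 a i hx, pd_B2_3 a j hx, pd_B2_3 j k hx,
      pd_B2_3 i k hx, pd_B2_3 i j hx, pd_B4_5 a i j k hx]
    simp only [eq_self_iff_true, if_true]
    ring
  have hsq : ∑ a : Fin m, (x a) ^ 2 = ‖x‖ ^ 2 := by
    rw [EuclideanSpace.norm_eq,
      Real.sq_sqrt (Finset.sum_nonneg fun _ _ => sq_nonneg _)]
    exact Finset.sum_congr rfl fun a _ => by rw [Real.norm_eq_abs, sq_abs]
  have hd1 : ∀ p : Fin m, ∑ a : Fin m, (if a = p then (1:ℝ) else 0) * x a = x p := by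
    intro p
    simp only [ite_mul, one_mul, zero_mul, Finset.sum_ite_eq', Finset.mem_univ, if_true]
  have hd2 : ∀ p q : Fin m,
      ∑ a : Fin m, (if a = p then (1:ℝ) else 0) * (if a = q then (1:ℝ) else 0)
        = if p = q then (1:ℝ) else 0 := by
    intro p q
    simp only [ite_mul, one_mul, zero_mul, Finset.sum_ite_eq', Finset.mem_univ, if_true]
  rw [lap, Finset.sum_congr rfl fun a _ => key a]
  simp only [Finset.sum_add_distrib, ← Finset.mul_sum, Finset.sum_const, Finset.card_univ,
    Fintype.card_fin, nsmul_eq_mul]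
  rw [hsq, hd1 i, hd1 j, hd1 k, hd2 i j, hd2 i k, hd2 j k]
  simp only [vMN]
  have hS : Real.sqrt (((m : ℝ) - 1) * ((m : ℝ) + 2)) ≠ 0 := by
    have h2 : (2:ℝ) ≤ (m:ℝ) := by exact_mod_cast hm
    have : (0:ℝ) < ((m : ℝ) - 1) * ((m : ℝ) + 2) := by nlinarith
    exact ne_of_gt (Real.sqrt_pos.mpr this)
  generalize Real.sqrt (((m : ℝ) - 1) * ((m : ℝ) + 2)) = S at hS
  generalize (if i = j then (1:ℝ) else 0) = e1
  generalize (if j = k then (1:ℝ) else 0) = e2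
  generalize (if i = k then (1:ℝ) else 0) = e3
  field_simp
  ring
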